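/- The determinant of any n×n matrix with entries in {0,1} (viewed over the reals) satisfies |det(C)| ≤ (n+1)^{(n+1)/2} / 2^n. -/

import Mathlib

open Matrix Finset

lemma trace_eq_sum_eigen {m : Type*} [Fintype m] [DecidableEq m]
    {A : Matrix m m ℝ} (hA : A.IsHermitian) :
    A.trace = ∑ i, hA.eigenvalues i := by
  conv_lhs => rw [hA.spectral_theorem]
  rw [Unitary.conjStarAlgAut_apply]
  rw [Matrix.trace_mul_cycle]
  rw [(Matrix.mem_unitaryGroup_iff').mp (hA.eigenvectorUnitary).2, one_mul, Matrix.trace_diagonal]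
  simp

lemma hadamard_pm_one {m : Type*} [Fintype m] [DecidableEq m]
    (M : Matrix m m ℝ) (hM : ∀ i j, M i j = 1 ∨ M i j = -1) :
    |M.det| ≤ (Fintype.card m : ℝ) ^ ((Fintype.card m : ℝ) / 2) := by
  set N := Fintype.card m with hN
  rcases Nat.eq_zero_or_pos N with h0 | hpos
  · have : IsEmpty m := Fintype.card_eq_zero_iff.mp h0
    simp [Matrix.det_isEmpty, h0]
  have hNpos : (0:ℝ) < N := by exact_mod_cast hpos
  have hG : (M * Mᴴ).PosSemidef := Matrix.posSemidef_self_mul_conjTranspose M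
  have hH := hG.isHermitian
  set lam := hH.eigenvalues with hlam
  have hlam_nonneg : ∀ i, 0 ≤ lam i := fun i => hG.eigenvalues_nonneg i
  -- trace
  have hsq : ∀ i j, M i j * M i j = 1 := by
    intro i j; rcases hM i j with h | h <;> rw [h] <;> ring
  have htr : ∑ i, lam i = (N : ℝ) * N := by
    rw [← trace_eq_sum_eigen hH]
    simp only [Matrix.trace, Matrix.diag, Matrix.mul_apply, Matrix.conjTranspose_apply,
      star_trivial, hsq]
    simp [hN, mul_comm]
  -- AM-GM
  have hw : ∑ _i : m, (N : ℝ)⁻¹ = 1 := by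
    simp [hN]
    exact div_self hNpos.ne'
  have key : ∏ i, (lam i) ^ ((N : ℝ)⁻¹) ≤ (N : ℝ) := by
    have := Real.geom_mean_le_arith_mean_weighted Finset.univ (fun _ => (N:ℝ)⁻¹) lam
      (fun i _ => by positivity) hw (fun i _ => hlam_nonneg i)
    calc ∏ i, (lam i) ^ ((N : ℝ)⁻¹) ≤ ∑ i, (N:ℝ)⁻¹ * lam i := this
      _ = (N:ℝ)⁻¹ * ((N:ℝ) * N) := by rw [← Finset.mul_sum, htr]
      _ = N := by field_simp
  have hdetG : (M * Mᴴ).det = ∏ i, lam i := by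
    rw [hH.det_eq_prod_eigenvalues]; simp; rfl
  have hprod : ∏ i, lam i ≤ (N : ℝ) ^ (N : ℕ) := by
    have h1 : (∏ i, (lam i) ^ ((N : ℝ)⁻¹)) ^ (N : ℕ) ≤ (N : ℝ) ^ (N : ℕ) := by
      apply pow_le_pow_left₀ _ key
      exact Finset.prod_nonneg fun i _ => Real.rpow_nonneg (hlam_nonneg i) _
    calc ∏ i, lam i = (∏ i, (lam i) ^ ((N : ℝ)⁻¹)) ^ (N : ℕ) := by
          rw [← Finset.prod_pow]
          refine Finset.prod_congr rfl fun i _ => ?_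
          rw [← Real.rpow_natCast ((lam i) ^ ((N:ℝ)⁻¹)) N, ← Real.rpow_mul (hlam_nonneg i),
            inv_mul_cancel₀ (ne_of_gt hNpos), Real.rpow_one]
      _ ≤ _ := h1
  have hdet2 : M.det ^ 2 ≤ (N : ℝ) ^ (N : ℕ) := by
    have : M.det ^ 2 = (M * Mᴴ).det := by
      rw [Matrix.det_mul, Matrix.det_conjTranspose]
      simp [sq]
    rw [this, hdetG]; exact hprod
  have hrhs : ((N : ℝ) ^ ((N : ℝ)/2)) ^ 2 = (N : ℝ) ^ (N : ℕ) := by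
    rw [← Real.rpow_natCast ((N:ℝ) ^ ((N:ℝ)/2)) 2, ← Real.rpow_mul (le_of_lt hNpos)]
    rw [← Real.rpow_natCast (N:ℝ) N]
    norm_num
  have habs : |M.det| ^ 2 ≤ ((N : ℝ) ^ ((N : ℝ)/2)) ^ 2 := by
    rw [hrhs, sq_abs]; exact hdet2
  exact (pow_le_pow_iff_left₀ (abs_nonneg _) (Real.rpow_nonneg (le_of_lt hNpos) _) two_ne_zero).mp habs

theorem binary_matrix_det_bound (n : ℕ) (C : Matrix (Fin n) (Fin n) ℝ)
    (hC : ∀ i j, C i j = 0 ∨ C i j = 1) :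
    |C.det| ≤ ((n : ℝ) + 1) ^ (((n : ℝ) + 1) / 2) / 2 ^ n := by
  set M : Matrix (Unit ⊕ Fin n) (Unit ⊕ Fin n) ℝ :=
    Matrix.fromBlocks 1 (Matrix.of fun _ _ => 1) (Matrix.of fun _ _ => 1)
      (Matrix.of fun i j => 1 - 2 * C i j) with hMdef
  have hMentries : ∀ i j, M i j = 1 ∨ M i j = -1 := by
    rintro (i | i) (j | j) <;>
      simp only [hMdef, Matrix.fromBlocks_apply₁₁, Matrix.fromBlocks_apply₁₂,
        Matrix.fromBlocks_apply₂₁, Matrix.fromBlocks_apply₂₂, Matrix.of_apply,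
        Matrix.one_apply]
    · left; simp
    · left; trivial
    · left; trivial
    · rcases hC i j with h | h <;> rw [h] <;> [left; right] <;> ring
  have hblock : (Matrix.of fun i j => 1 - 2 * C i j) -
      (Matrix.of fun (_ : Fin n) (_ : Unit) => (1:ℝ)) *
        (Matrix.of fun (_ : Unit) (_ : Fin n) => (1:ℝ)) = (-2 : ℝ) • C := by
    ext i j
    simp only [Matrix.sub_apply, Matrix.mul_apply, Matrix.of_apply, Matrix.smul_apply,
      Finset.univ_unique, Finset.sum_singleton, smul_eq_mul]
    ring
  have hdetM : M.det = (-2 : ℝ) ^ n * C.det := by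
    rw [hMdef, Matrix.det_fromBlocks_one₁₁, hblock, Matrix.det_smul]
    simp
  have hcard : (Fintype.card (Unit ⊕ Fin n) : ℝ) = (n : ℝ) + 1 := by
    simp [add_comm]
  have := hadamard_pm_one M hMentries
  rw [hcard, hdetM, abs_mul, abs_pow, abs_neg] at this
  have h2 : |(2:ℝ)| ^ n = (2:ℝ) ^ n := by norm_num
  rw [h2] at this
  rw [le_div_iff₀ (by positivity), mul_comm]
  exact this
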